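/- Assume (H1), (H3), (H4), that Π maps 𝔄(q) onto H⁻ for every q ∈ Q (so Φ : Q × H⁻ → H is well-defined), that Q is compact, and that Φ is continuous. If the semi-trajectory u(t) = ψ^t(q,u₀), t ≥ 0, has precompact image, then dist(u(t), 𝔄(ϑ^t(q))) → 0 as t → +∞, and moreover |u(t) − Φ(ϑ^t(q), Π u(t))| → 0 as t → +∞. -/

import Mathlib

open MeasureTheory Set Bornology Filter Topology RealInnerProductSpace

noncomputable section

variable {Q H : Type*}

section Defs
variable [MetricSpace Q] [NormedAddCommGroup H] [InnerProductSpace ℝ H] [CompleteSpace H]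

def IsFlow (ϑ : ℝ → Q → Q) : Prop :=
  (∀ q, ϑ 0 q = q) ∧ (∀ t s q, ϑ (t + s) q = ϑ t (ϑ s q)) ∧
    Continuous fun p : ℝ × Q => ϑ p.1 p.2

def IsCocycle (ϑ : ℝ → Q → Q) (ψ : ℝ → Q → H → H) : Prop :=
  (∀ q u, ψ 0 q u = u) ∧
  (∀ t s : ℝ, 0 ≤ t → 0 ≤ s → ∀ q u, ψ (t + s) q u = ψ t (ϑ s q) (ψ s q u)) ∧
  ContinuousOn (fun p : ℝ × Q × H => ψ p.1 p.2.1 p.2.2) {p : ℝ × Q × H | 0 ≤ p.1}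

def IsCompleteTraj (ϑ : ℝ → Q → Q) (ψ : ℝ → Q → H → H) (q : Q) (u : ℝ → H) : Prop :=
  Continuous u ∧ ∀ t s : ℝ, 0 ≤ t → u (t + s) = ψ t (ϑ s q) (u s)

def IsAmenable (ν : ℝ) (u : ℝ → H) : Prop :=
  IntegrableOn (fun s : ℝ => Real.exp (2 * ν * s) * ‖u s‖ ^ 2) (Set.Iic (0:ℝ))

def amenSet (ϑ : ℝ → Q → Q) (ψ : ℝ → Q → H → H) (ν : ℝ) (q : Q) : Set H :=
  {u₀ | ∃ u : ℝ → H, IsCompleteTraj ϑ ψ q u ∧ IsAmenable ν u ∧ u 0 = u₀}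

structure HypH1 (P : H →L[ℝ] H) (Hplus Hminus : Submodule ℝ H) : Prop where
  selfAdj : IsSelfAdjoint P
  closed_plus : IsClosed (Hplus : Set H)
  orth : Hminus = Hplusᗮ
  inv_plus : ∀ u ∈ Hplus, P u ∈ Hplus
  inv_minus : ∀ u ∈ Hminus, P u ∈ Hminus
  pos : ∀ u ∈ Hplus, u ≠ 0 → (0:ℝ) < ⟪P u, u⟫
  neg : ∀ u ∈ Hminus, u ≠ 0 → ⟪P u, u⟫ < 0

def HypH2 (Hminus : Submodule ℝ H) (j : ℕ) : Prop :=
  FiniteDimensional ℝ Hminus ∧ Module.finrank ℝ Hminus = j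

def HypH3 (ψ : ℝ → Q → H → H) (P : H →L[ℝ] H) (δ ν : ℝ) : Prop :=
  0 < δ ∧ 0 < ν ∧ ∀ (q : Q) (u v : H) (l r : ℝ), 0 ≤ l → l ≤ r →
    Real.exp (2 * ν * r) * ⟪P (ψ r q u - ψ r q v), ψ r q u - ψ r q v⟫ -
      Real.exp (2 * ν * l) * ⟪P (ψ l q u - ψ l q v), ψ l q u - ψ l q v⟫ ≤
      -δ * ∫ s in l..r, Real.exp (2 * ν * s) * ‖ψ s q u - ψ s q v‖ ^ 2

def IsOrthProjOnto (Hminus : Submodule ℝ H) (Pi : H →L[ℝ] H) : Prop :=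
  (∀ u, Pi u ∈ Hminus) ∧ ∀ u, u - Pi u ∈ Hminusᗮ

def HypCOM2 (ψ : ℝ → Q → H → H) : Prop :=
  ∃ tc : ℝ, 0 < tc ∧ ∀ (q : Q) (s : Set H), IsBounded s → IsCompact (closure (ψ tc q '' s))

def HypCOM3 (ψ : ℝ → Q → H → H) : Prop :=
  ∀ (q : Q) (u₀ : H), IsBounded ((fun t => ψ t q u₀) '' Set.Ici (0:ℝ)) →
    IsCompact (closure ((fun t => ψ t q u₀) '' Set.Ici (0:ℝ)))

def LyapunovStable (ψ : ℝ → Q → H → H) (q : Q) (v : ℝ → H) : Prop :=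
  ∀ ε > 0, ∃ η > 0, ∀ u₀ : H, ‖u₀ - v 0‖ < η → ∀ t ≥ 0, ‖ψ t q u₀ - v t‖ < ε

end Defs

def circleFlow (σ : ℝ) : ℝ → AddCircle σ → AddCircle σ := fun t θ => θ + (t : AddCircle σ)

section AuxLemmas

lemma integrableOn_exp_two_nu {ν : ℝ} (hν : 0 < ν) :
    IntegrableOn (fun s : ℝ => Real.exp (2 * ν * s)) (Set.Iic (0:ℝ)) := by
  have h1 : Integrable ((Set.Iic (0:ℝ)).indicator Real.exp) volume :=
    (integrable_indicator_iff measurableSet_Iic).2 (integrableOn_exp_Iic 0)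
  have h2 : Integrable (fun s : ℝ => (Set.Iic (0:ℝ)).indicator Real.exp (2 * ν * s)) volume :=
    h1.comp_mul_left' (by positivity : (2:ℝ) * ν ≠ 0)
  have h3 : (fun s : ℝ => (Set.Iic (0:ℝ)).indicator Real.exp (2 * ν * s))
      = (Set.Iic (0:ℝ)).indicator (fun s => Real.exp (2 * ν * s)) := by
    funext s
    have hiff : 2 * ν * s ≤ 0 ↔ s ≤ 0 := by
      constructor <;> intro h <;> nlinarith
    simp [Set.indicator_apply, Set.mem_Iic, hiff]
  rw [h3, integrable_indicator_iff measurableSet_Iic] at h2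
  exact h2

variable {Q H : Type*} [MetricSpace Q] [NormedAddCommGroup H] [InnerProductSpace ℝ H]
  [CompleteSpace H]

set_option linter.unusedSectionVars false

lemma traj_V_mono {ϑ : ℝ → Q → Q} {ψ : ℝ → Q → H → H} {P : H →L[ℝ] H} {δ ν : ℝ}
    (h3 : HypH3 ψ P δ ν) {q : Q} {u v : ℝ → H}
    (hu : IsCompleteTraj ϑ ψ q u) (hv : IsCompleteTraj ϑ ψ q v)
    {l : ℝ} (hl : l ≤ 0) :
    ⟪P (u 0 - v 0), u 0 - v 0⟫ ≤ Real.exp (2 * ν * l) * ⟪P (u l - v l), u l - v l⟫ := by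
  obtain ⟨hδ, hν, h3'⟩ := h3
  have key := h3' (ϑ l q) (u l) (v l) 0 (-l) le_rfl (by linarith)
  have hu0 : ψ (-l) (ϑ l q) (u l) = u 0 := by
    have h := hu.2 (-l) l (by linarith); rw [neg_add_cancel] at h; exact h.symm
  have hv0 : ψ (-l) (ϑ l q) (v l) = v 0 := by
    have h := hv.2 (-l) l (by linarith); rw [neg_add_cancel] at h; exact h.symm
  have hul : ψ 0 (ϑ l q) (u l) = u l := by
    have h := hu.2 0 l le_rfl; rw [zero_add] at h; exact h.symm
  have hvl : ψ 0 (ϑ l q) (v l) = v l := by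
    have h := hv.2 0 l le_rfl; rw [zero_add] at h; exact h.symm
  rw [hu0, hv0, hul, hvl] at key
  have hInt : 0 ≤ ∫ s in (0:ℝ)..(-l),
      Real.exp (2 * ν * s) * ‖ψ s (ϑ l q) (u l) - ψ s (ϑ l q) (v l)‖ ^ 2 :=
    intervalIntegral.integral_nonneg (by linarith) (fun x _ => by positivity)
  simp only [mul_zero, Real.exp_zero, one_mul] at key
  have h0 : Real.exp (2 * ν * (-l)) * ⟪P (u 0 - v 0), u 0 - v 0⟫ ≤
      ⟪P (u l - v l), u l - v l⟫ := by nlinarith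
  have e1 : Real.exp (2 * ν * l) * Real.exp (2 * ν * (-l)) = 1 := by
    rw [← Real.exp_add, show 2 * ν * l + 2 * ν * (-l) = 0 by ring, Real.exp_zero]
  have h2 := mul_le_mul_of_nonneg_left h0 (Real.exp_nonneg (2 * ν * l))
  rw [← mul_assoc, e1, one_mul] at h2
  exact h2

lemma amen_traj_unique {ϑ : ℝ → Q → Q} {ψ : ℝ → Q → H → H} {P : H →L[ℝ] H}
    {Hplus Hminus : Submodule ℝ H} {δ ν : ℝ}
    (h1 : HypH1 P Hplus Hminus) (h3 : HypH3 ψ P δ ν)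
    {Pi : H →L[ℝ] H} (hPi : IsOrthProjOnto Hminus Pi)
    {q : Q} {u v : ℝ → H}
    (hu : IsCompleteTraj ϑ ψ q u) (hau : IsAmenable ν u)
    (hv : IsCompleteTraj ϑ ψ q v) (hav : IsAmenable ν v)
    (hPiuv : Pi (u 0) = Pi (v 0)) : u 0 = v 0 := by
  have hν : 0 < ν := h3.2.1
  -- the difference at time 0 lies in Hplus
  have hd0mem : u 0 - v 0 ∈ Hplus := by
    have h := hPi.2 (u 0 - v 0)
    rw [map_sub, hPiuv, sub_self, sub_zero] at h
    haveI : CompleteSpace ↥Hplus := h1.closed_plus.completeSpace_coe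
    rw [h1.orth, Submodule.orthogonal_orthogonal] at h
    exact h
  by_contra hne
  have hd0ne : u 0 - v 0 ≠ 0 := sub_ne_zero.mpr hne
  have hpos : 0 < ⟪P (u 0 - v 0), u 0 - v 0⟫ := h1.pos _ hd0mem hd0ne
  -- integrability of the weighted squared difference
  have hFint : IntegrableOn (fun s : ℝ => Real.exp (2 * ν * s) * ‖u s - v s‖ ^ 2)
      (Set.Iic (0:ℝ)) := by
    refine Integrable.mono' ((hau.add hav).const_mul 2)
      (((Real.continuous_exp.comp (continuous_const.mul continuous_id)).mul
        (((hu.1.sub hv.1).norm.pow 2))).aestronglyMeasurable) ?_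
    filter_upwards with s
    rw [Real.norm_eq_abs, abs_of_nonneg (by positivity)]
    show _ ≤ 2 * (Real.exp (2 * ν * s) * ‖u s‖ ^ 2 + Real.exp (2 * ν * s) * ‖v s‖ ^ 2)
    have hns := norm_sub_le (u s) (v s)
    have h2 : ‖u s - v s‖ ^ 2 ≤ 2 * ‖u s‖ ^ 2 + 2 * ‖v s‖ ^ 2 := by
      nlinarith [mul_self_le_mul_self (norm_nonneg (u s - v s)) hns,
        sq_nonneg (‖u s‖ - ‖v s‖)]
    have hE := Real.exp_pos (2 * ν * s)
    nlinarith [mul_le_mul_of_nonneg_left h2 hE.le]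
  -- pointwise lower bound on the weighted squared difference
  have hb : ∀ l ≤ (0:ℝ), ⟪P (u 0 - v 0), u 0 - v 0⟫ ≤
      (‖P‖ + 1) * (Real.exp (2 * ν * l) * ‖u l - v l‖ ^ 2) := by
    intro l hl
    have h := traj_V_mono h3 hu hv hl
    have hV : ⟪P (u l - v l), u l - v l⟫ ≤ ‖P‖ * ‖u l - v l‖ ^ 2 := by
      have h1' := real_inner_le_norm (P (u l - v l)) (u l - v l)
      have h2' := P.le_opNorm (u l - v l)
      nlinarith [norm_nonneg (u l - v l), norm_nonneg (P (u l - v l))]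
    have hE := Real.exp_pos (2 * ν * l)
    nlinarith [mul_le_mul_of_nonneg_left hV hE.le, norm_nonneg (u l - v l),
      norm_nonneg P, sq_nonneg ‖u l - v l‖]
  set c : ℝ := ⟪P (u 0 - v 0), u 0 - v 0⟫ / (‖P‖ + 1) with hc
  have hPpos : (0:ℝ) < ‖P‖ + 1 := by positivity
  have hcpos : 0 < c := div_pos hpos hPpos
  have hconst : Integrable (fun _ : ℝ => c) (volume.restrict (Set.Iic (0:ℝ))) := by
    refine hFint.mono' aestronglyMeasurable_const ?_
    rw [ae_restrict_iff' measurableSet_Iic]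
    filter_upwards with l hl
    rw [Real.norm_eq_abs, abs_of_nonneg hcpos.le, hc, div_le_iff₀ hPpos, mul_comm]
    exact hb l hl
  rw [integrable_const_iff] at hconst
  rcases hconst with h | h
  · exact hcpos.ne' h
  · have h := h.measure_univ_lt_top; rw [Measure.restrict_apply_univ, Real.volume_Iic] at h
    exact (lt_irrefl _ h).elim

end AuxLemmas

/-- Proposition 4: under (H1), (H3), (H4), with `Π` mapping each amenable set onto `H⁻`,
`Q` compact and `Φ` continuous, every precompact semi-trajectory is attracted by the
family of amenable sets: `dist(u(t), 𝔄(ϑ^t q)) → 0` and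
`‖u(t) − Φ(ϑ^t q, Π u(t))‖ → 0` as `t → +∞`. -/
theorem amenable_sets_attract
    {Q H : Type*} [MetricSpace Q] [CompactSpace Q]
    [NormedAddCommGroup H] [InnerProductSpace ℝ H]
    [CompleteSpace H] [TopologicalSpace.SeparableSpace H]
    (ϑ : ℝ → Q → Q) (ψ : ℝ → Q → H → H)
    (hflow : IsFlow ϑ) (hcoc : IsCocycle ϑ ψ)
    (P : H →L[ℝ] H) (Hplus Hminus : Submodule ℝ H)
    (h1 : HypH1 P Hplus Hminus)
    (δ ν : ℝ) (h3 : HypH3 ψ P δ ν)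
    (h4 : ∀ q : Q, (amenSet ϑ ψ ν q).Nonempty)
    (Pi : H →L[ℝ] H) (hPi : IsOrthProjOnto Hminus Pi)
    (honto : ∀ q : Q, Pi '' (amenSet ϑ ψ ν q) = (Hminus : Set H))
    (Φ : Q → ↥Hminus → H)
    (hΦmem : ∀ (q : Q) (ζ : ↥Hminus), Φ q ζ ∈ amenSet ϑ ψ ν q)
    (hΦproj : ∀ (q : Q) (ζ : ↥Hminus), Pi (Φ q ζ) = (ζ : H))
    (hΦcont : Continuous fun p : Q × ↥Hminus => Φ p.1 p.2)
    (q : Q) (u₀ : H)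
    (hprecompact : IsCompact (closure ((fun t => ψ t q u₀) '' Set.Ici (0:ℝ)))) :
    Tendsto (fun t : ℝ => Metric.infDist (ψ t q u₀) (amenSet ϑ ψ ν (ϑ t q)))
        atTop (𝓝 0) ∧
    Tendsto (fun t : ℝ => ‖ψ t q u₀ - Φ (ϑ t q) ⟨Pi (ψ t q u₀), hPi.1 _⟩‖)
        atTop (𝓝 0) := by
  have hν : 0 < ν := h3.2.1
  have hψt : ∀ {t : ℝ}, 0 ≤ t → Continuous (fun p : Q × H => ψ t p.1 p.2) := by
    intro t ht
    have hmap : Continuous (fun p : Q × H => ((t, p.1, p.2) : ℝ × Q × H)) :=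
      continuous_const.prodMk continuous_id
    rw [← continuousOn_univ]
    exact hcoc.2.2.comp hmap.continuousOn (fun p _ => ht)
  have hϑc : ∀ s : ℝ, Continuous (fun q' : Q => ϑ s q') := fun s =>
    hflow.2.2.comp (continuous_const.prodMk continuous_id)
  have main : Tendsto (fun t : ℝ =>
      ‖ψ t q u₀ - Φ (ϑ t q) ⟨Pi (ψ t q u₀), hPi.1 _⟩‖) atTop (𝓝 0) := by
    by_contra hcon
    rw [Metric.tendsto_nhds] at hcon
    push_neg at hcon
    obtain ⟨ε, hε, hfreq⟩ := hcon
    have hfreq' : ∀ n : ℕ, ∃ t, (n:ℝ) ≤ t ∧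
        ε ≤ ‖ψ t q u₀ - Φ (ϑ t q) ⟨Pi (ψ t q u₀), hPi.1 _⟩‖ := by
      intro n
      obtain ⟨t, ht1, ht2⟩ := (frequently_atTop.mp hfreq) (n:ℝ)
      rw [Real.dist_0_eq_abs, abs_of_nonneg (norm_nonneg _)] at ht2
      exact ⟨t, ht1, ht2⟩
    choose tseq htseq1 htseq2 using hfreq'
    have htt : Tendsto tseq atTop atTop :=
      tendsto_atTop_mono htseq1 tendsto_natCast_atTop_atTop
    set U : Ultrafilter ℕ := Ultrafilter.of atTop with hUdef
    have hUle : (U : Filter ℕ) ≤ atTop := Ultrafilter.of_le _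
    have htU : Tendsto tseq (U : Filter ℕ) atTop := htt.mono_left hUle
    obtain ⟨qbar, -, hqbar⟩ := isCompact_univ.ultrafilter_le_nhds
      (U.map fun n => ϑ (tseq n) q)
      (by rw [Ultrafilter.coe_map, le_principal_iff]; exact univ_mem)
    have hqbarT : Tendsto (fun n => ϑ (tseq n) q) (U : Filter ℕ) (𝓝 qbar) := by
      rw [Tendsto, ← Ultrafilter.coe_map]; exact hqbar
    have hev0 : ∀ s : ℝ, ∀ᶠ n in (U : Filter ℕ), 0 ≤ tseq n + s := by
      intro s
      filter_upwards [htU.eventually (eventually_ge_atTop (-s))] with n hn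
      linarith
    have hlim : ∀ s : ℝ, ∃ x, x ∈ closure ((fun t => ψ t q u₀) '' Set.Ici (0:ℝ)) ∧
        Tendsto (fun n => ψ (tseq n + s) q u₀) (U : Filter ℕ) (𝓝 x) := by
      intro s
      have hmem : ∀ᶠ n in (U : Filter ℕ),
          ψ (tseq n + s) q u₀ ∈ closure ((fun t => ψ t q u₀) '' Set.Ici (0:ℝ)) :=
        (hev0 s).mono fun n hn => subset_closure ⟨tseq n + s, hn, rfl⟩
      obtain ⟨x, hx, hle⟩ := hprecompact.ultrafilter_le_nhds
        (U.map fun n => ψ (tseq n + s) q u₀)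
        (by rw [Ultrafilter.coe_map, le_principal_iff]; exact mem_map.mpr hmem)
      exact ⟨x, hx, by rw [Tendsto, ← Ultrafilter.coe_map]; exact hle⟩
    choose ubar hubarK hubarT using hlim
    have htraj : ∀ t s : ℝ, 0 ≤ t → ubar (t + s) = ψ t (ϑ s qbar) (ubar s) := by
      intro t s ht
      have hev2 : (fun n => ψ (tseq n + (t + s)) q u₀) =ᶠ[(U : Filter ℕ)]
          (fun n => ψ t (ϑ s (ϑ (tseq n) q)) (ψ (tseq n + s) q u₀)) := by
        filter_upwards [hev0 s] with n hn
        have h2 : ϑ (tseq n + s) q = ϑ s (ϑ (tseq n) q) := by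
          rw [show tseq n + s = s + tseq n by ring, hflow.2.1]
        rw [show tseq n + (t + s) = t + (tseq n + s) by ring,
          hcoc.2.1 t (tseq n + s) ht hn q u₀, h2]
      have hT2 : Tendsto (fun n => ψ t (ϑ s (ϑ (tseq n) q)) (ψ (tseq n + s) q u₀))
          (U : Filter ℕ) (𝓝 (ψ t (ϑ s qbar) (ubar s))) :=
        ((hψt ht).tendsto (ϑ s qbar, ubar s)).comp
          ((((hϑc s).tendsto qbar).comp hqbarT).prodMk_nhds (hubarT s))
      exact tendsto_nhds_unique ((hubarT (t + s)).congr' hev2) hT2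
    have hcont : Continuous ubar := by
      rw [continuous_iff_continuousAt]
      intro x
      have hg : Continuous (fun t : ℝ => ((t - (x-1), ϑ (x-1) qbar, ubar (x-1)) : ℝ × Q × H)) :=
        (continuous_id.sub continuous_const).prodMk continuous_const
      have h2 : ContinuousOn (fun t : ℝ => ψ (t - (x-1)) (ϑ (x-1) qbar) (ubar (x-1)))
          (Set.Ici (x-1)) :=
        hcoc.2.2.comp hg.continuousOn (fun t htx => by simpa using sub_nonneg.mpr (Set.mem_Ici.mp htx))
      have hCO : ContinuousOn ubar (Set.Ici (x - 1)) := by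
        refine h2.congr fun t htx => ?_
        have h := htraj (t - (x-1)) (x-1) (sub_nonneg.mpr htx)
        rw [sub_add_cancel] at h
        exact h
      exact hCO.continuousAt (Ici_mem_nhds (by linarith))
    obtain ⟨C, hC⟩ := isBounded_iff_forall_norm_le.mp hprecompact.isBounded
    have hamen : IsAmenable ν ubar := by
      refine Integrable.mono' ((integrableOn_exp_two_nu hν).const_mul (C^2))
        (((Real.continuous_exp.comp (continuous_const.mul continuous_id)).mul
          (hcont.norm.pow 2)).aestronglyMeasurable) ?_
      filter_upwards with s
      rw [Real.norm_eq_abs, abs_of_nonneg (by positivity)]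
      have h1' := hC _ (hubarK s)
      have hE := Real.exp_pos (2 * ν * s)
      have hsq : ‖ubar s‖ ^ 2 ≤ C ^ 2 := by nlinarith [norm_nonneg (ubar s)]
      nlinarith [mul_le_mul_of_nonneg_left hsq hE.le]
    have hkey : Φ qbar ⟨Pi (ubar 0), hPi.1 _⟩ = ubar 0 := by
      obtain ⟨w, hw, haw, hw0⟩ := hΦmem qbar ⟨Pi (ubar 0), hPi.1 _⟩
      have hproj : Pi (w 0) = Pi (ubar 0) := by
        rw [hw0, hΦproj]
      have h := amen_traj_unique h1 h3 hPi hw haw ⟨hcont, htraj⟩ hamen hproj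
      rw [← hw0]; exact h
    have huu0 : Tendsto (fun n => ψ (tseq n) q u₀) (U : Filter ℕ) (𝓝 (ubar 0)) := by
      have h := hubarT 0
      simpa using h
    have hPiT : Tendsto (fun n => (⟨Pi (ψ (tseq n) q u₀), hPi.1 _⟩ : ↥Hminus))
        (U : Filter ℕ) (𝓝 ⟨Pi (ubar 0), hPi.1 _⟩) := by
      rw [tendsto_subtype_rng]
      exact ((ContinuousLinearMap.continuous Pi).tendsto _).comp huu0
    have hΦT : Tendsto (fun n => Φ (ϑ (tseq n) q) ⟨Pi (ψ (tseq n) q u₀), hPi.1 _⟩)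
        (U : Filter ℕ) (𝓝 (ubar 0)) := by
      have h := (hΦcont.tendsto (qbar, ⟨Pi (ubar 0), hPi.1 _⟩)).comp
        (hqbarT.prodMk_nhds hPiT)
      rwa [hkey] at h
    have hzero : Tendsto (fun n => ‖ψ (tseq n) q u₀ -
        Φ (ϑ (tseq n) q) ⟨Pi (ψ (tseq n) q u₀), hPi.1 _⟩‖) (U : Filter ℕ) (𝓝 0) := by
      have h := huu0.sub hΦT
      rw [sub_self] at h
      simpa [Function.comp_def] using (continuous_norm.tendsto (0:H)).comp h
    have hfin : ε ≤ 0 := ge_of_tendsto hzero (Eventually.of_forall fun n => htseq2 n)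
    linarith
  refine ⟨?_, main⟩
  apply squeeze_zero (fun t => Metric.infDist_nonneg) (fun t => ?_) main
  exact (Metric.infDist_le_dist_of_mem
    (hΦmem (ϑ t q) ⟨Pi (ψ t q u₀), hPi.1 _⟩)).trans_eq (dist_eq_norm _ _)
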